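/- Let G be a finite group possessing an abelian normal subgroup A ⊴ G such that the quotient G/A is cyclic. Then Br^2(G) is trivial: every untwisted class in H^2(G,U(1)) is the trivial class. -/

import Mathlib

namespace DT

variable {G : Type*} [Group G]

/-- The (inhomogeneous bar) 2-cocycle identity for a `U(1)`-valued 2-cochain, written
multiplicatively: `ω(g₂,g₃)·ω(g₁,g₂g₃) = ω(g₁g₂,g₃)·ω(g₁,g₂)`. -/
def IsCocycle2 (ω : G → G → Circle) : Prop :=
  ∀ g₁ g₂ g₃ : G, ω g₂ g₃ * ω g₁ (g₂ * g₃) = ω (g₁ * g₂) g₃ * ω g₁ g₂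

/-- A `U(1)`-valued 2-coboundary: `ω(g₁,g₂) = α(g₂)·α(g₁g₂)⁻¹·α(g₁)`. -/
def IsCoboundary2 (ω : G → G → Circle) : Prop :=
  ∃ α : G → Circle, ∀ g₁ g₂ : G, ω g₁ g₂ = α g₂ * (α (g₁ * g₂))⁻¹ * α g₁

/-- A 2-cochain is untwisted if `ω(g,h) = ω(h,g)` for all commuting pairs. -/
def Untwisted2 (ω : G → G → Circle) : Prop :=
  ∀ g h : G, g * h = h * g → ω g h = ω h g

end DT

open DT

namespace Stmt12Aux

/-- `Circle` is divisible (as an additive group, via `Additive`). -/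
noncomputable instance : DivisibleBy (Additive Circle) ℤ where
  div a n := if n = 0 then 0 else
    Additive.ofMul (Circle.exp (Complex.arg ((Additive.toMul a : Circle) : ℂ) / (n : ℝ)))
  div_zero a := if_pos rfl
  div_cancel {n} a hn := by
    simp only [if_neg hn]
    set t : ℝ := Complex.arg ((Additive.toMul a : Circle) : ℂ) / (n : ℝ) with ht
    have hexp : Circle.exp ((n : ℝ) * t) = Circle.exp t ^ (n : ℤ) := by
      have h := map_zsmul Circle.expHom n t
      rw [zsmul_eq_mul] at h
      have h2 := congrArg Additive.toMul h
      simpa [Circle.expHom, toMul_zsmul] using h2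
    apply Additive.toMul.injective
    rw [toMul_zsmul, toMul_ofMul, ← hexp, ht]
    have hn' : (n : ℝ) ≠ 0 := by exact_mod_cast hn
    rw [mul_div_cancel₀ _ hn']
    exact Circle.exp_arg _

universe u

variable {G : Type u} [Group G]

/-- The twisted product `Circle ×_ω G`. -/
@[ext] structure EE (ω : G → G → Circle) : Type u where
  z : Circle
  g : G

variable (ω : G → G → Circle)

noncomputable instance : Mul (EE ω) := ⟨fun x y => ⟨x.z * y.z * ω x.g y.g, x.g * y.g⟩⟩
noncomputable instance : One (EE ω) := ⟨⟨1, 1⟩⟩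
noncomputable instance : Inv (EE ω) := ⟨fun x => ⟨(x.z * ω x.g x.g⁻¹)⁻¹, x.g⁻¹⟩⟩

lemma mul_z (x y : EE ω) : (x * y).z = x.z * y.z * ω x.g y.g := rfl
lemma mul_g (x y : EE ω) : (x * y).g = x.g * y.g := rfl
lemma one_z : (1 : EE ω).z = 1 := rfl
lemma one_g : (1 : EE ω).g = 1 := rfl
lemma inv_g (x : EE ω) : x⁻¹.g = x.g⁻¹ := rfl

/-- The group structure on `Circle ×_ω G` for a normalized cocycle `ω`. -/
noncomputable abbrev grp (hc : IsCocycle2 ω) (hL : ∀ g : G, ω 1 g = 1) (hR : ∀ g : G, ω g 1 = 1) :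
    Group (EE ω) := by
  have hinv : ∀ g : G, ω g⁻¹ g = ω g g⁻¹ := by
    intro g
    have h := hc g g⁻¹ g
    rw [inv_mul_cancel, mul_inv_cancel, hL, hR, mul_one, one_mul] at h
    exact h
  refine Group.ofLeftAxioms ?_ ?_ ?_
  · intro x y w
    apply EE.ext
    · show x.z * y.z * ω x.g y.g * w.z * ω (x.g * y.g) w.g
        = x.z * (y.z * w.z * ω y.g w.g) * ω x.g (y.g * w.g)
      have h := hc x.g y.g w.g
      calc x.z * y.z * ω x.g y.g * w.z * ω (x.g * y.g) w.g
          = x.z * y.z * w.z * (ω (x.g * y.g) w.g * ω x.g y.g) := by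
            simp only [mul_assoc, mul_comm, mul_left_comm]
        _ = x.z * y.z * w.z * (ω y.g w.g * ω x.g (y.g * w.g)) := by rw [← h]
        _ = x.z * (y.z * w.z * ω y.g w.g) * ω x.g (y.g * w.g) := by
            simp only [mul_assoc, mul_comm, mul_left_comm]
    · exact mul_assoc x.g y.g w.g
  · intro x
    apply EE.ext
    · show 1 * x.z * ω 1 x.g = x.z
      rw [hL, one_mul, mul_one]
    · exact one_mul x.g
  · intro x
    apply EE.ext
    · show (x.z * ω x.g x.g⁻¹)⁻¹ * x.z * ω x.g⁻¹ x.g = 1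
      rw [hinv, mul_inv_rev]
      group
    · exact inv_mul_cancel x.g

/-- The core argument: every normalized untwisted cocycle on an abelian-by-cyclic group
is a coboundary. -/
theorem main {G : Type u} [Group G] (N : Subgroup G) (hN : N.Normal)
    (hab : ∀ a ∈ N, ∀ b ∈ N, a * b = b * a) (hcyc : IsCyclic (G ⧸ N))
    (ω : G → G → Circle) (hc : IsCocycle2 ω) (hu : Untwisted2 ω)
    (hL : ∀ g : G, ω 1 g = 1) (hR : ∀ g : G, ω g 1 = 1) : IsCoboundary2 ω := by
  classical
  letI : Group (EE ω) := grp ω hc hL hR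
  -- the projection to G
  let π : EE ω →* G := { toFun := EE.g, map_one' := rfl, map_mul' := fun _ _ => rfl }
  -- the central embedding of Circle
  have hω11 : ω 1 1 = 1 := hL 1
  let ζ : Circle →* EE ω :=
    { toFun := fun u => ⟨u, 1⟩
      map_one' := rfl
      map_mul' := fun u v => by
        apply EE.ext
        · show u * v = u * v * ω 1 1
          rw [hω11, mul_one]
        · show (1 : G) = 1 * 1
          rw [one_mul] }
  -- commuting projections give commuting elements (untwistedness)
  have hcomm : ∀ x y : EE ω, x.g * y.g = y.g * x.g → x * y = y * x := by
    intro x y h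
    apply EE.ext
    · show x.z * y.z * ω x.g y.g = y.z * x.z * ω y.g x.g
      rw [hu _ _ h, mul_comm x.z y.z]
    · exact h
  -- the preimage of N
  let Nt : Subgroup (EE ω) := N.comap π
  have hmemNt : ∀ x : EE ω, x ∈ Nt ↔ x.g ∈ N := fun x => Iff.rfl
  have habNt : ∀ x y : EE ω, x ∈ Nt → y ∈ Nt → x * y = y * x := by
    intro x y hx hy
    exact hcomm x y (hab _ ((hmemNt x).mp hx) _ ((hmemNt y).mp hy))
  -- a lift of a generator of G/N
  obtain ⟨q, hq⟩ := hcyc.exists_generator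
  obtain ⟨x₀, hx₀⟩ := QuotientGroup.mk_surjective (s := N) q
  let e₀ : EE ω := ⟨1, x₀⟩
  have hπe : π e₀ = x₀ := rfl
  -- decomposition of elements of EE ω
  have hdec : ∀ x : EE ω, ∃ (i : ℤ) (a : EE ω), a ∈ Nt ∧ x = e₀ ^ i * a := by
    intro x
    obtain ⟨i, hi⟩ := Subgroup.mem_zpowers_iff.mp (hq ((x.g : G) : G ⧸ N))
    refine ⟨i, (e₀ ^ i)⁻¹ * x, ?_, by group⟩
    rw [hmemNt]
    have hg : ((e₀ ^ i)⁻¹ * x).g = (x₀ ^ i)⁻¹ * x.g := by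
      have : π ((e₀ ^ i)⁻¹ * x) = (π (e₀ ^ i))⁻¹ * π x := by
        rw [map_mul, map_inv]
      rw [map_zpow, hπe] at this
      exact this
    rw [hg, ← QuotientGroup.eq_one_iff]
    rw [QuotientGroup.mk_mul, QuotientGroup.mk_inv, QuotientGroup.mk_zpow, hx₀, hi]
    exact inv_mul_cancel _
  -- conjugation of Nt
  have hconjNt : ∀ a ∈ Nt, e₀ * a * e₀⁻¹ ∈ Nt := by
    intro a ha
    rw [hmemNt] at ha ⊢
    show x₀ * a.g * x₀⁻¹ ∈ N
    exact hN.conj_mem _ ha x₀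
  have hconjNt' : ∀ a ∈ Nt, e₀⁻¹ * a * e₀ ∈ Nt := by
    intro a ha
    rw [hmemNt] at ha ⊢
    show x₀⁻¹ * a.g * x₀ ∈ N
    have h := hN.conj_mem _ ha x₀⁻¹
    rwa [inv_inv] at h
  -- the subgroup of commutators with e₀
  let d : EE ω → EE ω := fun a => e₀ * a * e₀⁻¹ * a⁻¹
  have hdmem : ∀ a ∈ Nt, d a ∈ Nt := by
    intro a ha
    exact mul_mem (hconjNt a ha) (inv_mem ha)
  let K : Subgroup (EE ω) :=
    { carrier := {y | ∃ a, a ∈ Nt ∧ y = d a}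
      one_mem' := ⟨1, one_mem Nt, by show (1 : EE ω) = e₀ * 1 * e₀⁻¹ * 1⁻¹; group⟩
      mul_mem' := by
        rintro x y ⟨a, ha, rfl⟩ ⟨b, hb, rfl⟩
        refine ⟨a * b, mul_mem ha hb, ?_⟩
        have h1 : a⁻¹ * (e₀ * b * e₀⁻¹) = (e₀ * b * e₀⁻¹) * a⁻¹ :=
          habNt _ _ (inv_mem ha) (hconjNt b hb)
        have h2 : a⁻¹ * b⁻¹ = b⁻¹ * a⁻¹ := habNt _ _ (inv_mem ha) (inv_mem hb)
        show d a * d b = d (a * b)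
        refine Eq.symm ?_
        calc d (a * b) = (e₀ * (a * b) * e₀⁻¹) * (b⁻¹ * a⁻¹) := by
              unfold d; group
          _ = (e₀ * (a * b) * e₀⁻¹) * (a⁻¹ * b⁻¹) := by rw [← h2]
          _ = (e₀ * a * e₀⁻¹) * ((e₀ * b * e₀⁻¹) * a⁻¹) * b⁻¹ := by group
          _ = (e₀ * a * e₀⁻¹) * (a⁻¹ * (e₀ * b * e₀⁻¹)) * b⁻¹ := by rw [← h1]
          _ = d a * d b := by unfold d; group
      inv_mem' := by
        rintro x ⟨a, ha, rfl⟩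
        refine ⟨a⁻¹, inv_mem ha, ?_⟩
        have h1 : a * (e₀ * a⁻¹ * e₀⁻¹) = (e₀ * a⁻¹ * e₀⁻¹) * a :=
          habNt _ _ ha (hconjNt _ (inv_mem ha))
        show (d a)⁻¹ = d a⁻¹
        show (e₀ * a * e₀⁻¹ * a⁻¹)⁻¹ = e₀ * a⁻¹ * e₀⁻¹ * a⁻¹⁻¹
        calc (e₀ * a * e₀⁻¹ * a⁻¹)⁻¹ = a * (e₀ * a⁻¹ * e₀⁻¹) := by group
          _ = (e₀ * a⁻¹ * e₀⁻¹) * a := h1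
          _ = e₀ * a⁻¹ * e₀⁻¹ * a⁻¹⁻¹ := by group }
  have hKmem : ∀ y : EE ω, y ∈ K ↔ ∃ a, a ∈ Nt ∧ y = d a := fun y => Iff.rfl
  -- K is normal
  have hkey : ∀ i : ℤ, ∀ a ∈ Nt, e₀ ^ i * d a * (e₀ ^ i)⁻¹ ∈ K := by
    intro i
    induction i using Int.induction_on with
    | zero => intro a ha; simpa using (hKmem (d a)).mpr ⟨a, ha, rfl⟩
    | succ n ih =>
        intro a ha
        have hz : e₀ ^ ((n : ℤ) + 1) = e₀ ^ (n : ℤ) * e₀ := zpow_add_one e₀ n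
        have h1 : e₀ * d a * e₀⁻¹ = d (e₀ * a * e₀⁻¹) := by
          show e₀ * (e₀ * a * e₀⁻¹ * a⁻¹) * e₀⁻¹ = _
          show _ = e₀ * (e₀ * a * e₀⁻¹) * e₀⁻¹ * (e₀ * a * e₀⁻¹)⁻¹
          group
        have : e₀ ^ ((n : ℤ) + 1) * d a * (e₀ ^ ((n : ℤ) + 1))⁻¹
            = e₀ ^ (n : ℤ) * (e₀ * d a * e₀⁻¹) * (e₀ ^ (n : ℤ))⁻¹ := by
          rw [hz]; group
        rw [this, h1]
        exact ih _ (hconjNt a ha)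
    | pred n ih =>
        intro a ha
        have hz : e₀ ^ (-(n : ℤ) - 1) = e₀ ^ (-(n : ℤ)) * e₀⁻¹ := by
          rw [zpow_sub_one]
        have h1 : e₀⁻¹ * d a * e₀ = d (e₀⁻¹ * a * e₀) := by
          show e₀⁻¹ * (e₀ * a * e₀⁻¹ * a⁻¹) * e₀ = _
          show _ = e₀ * (e₀⁻¹ * a * e₀) * e₀⁻¹ * (e₀⁻¹ * a * e₀)⁻¹
          group
        have : e₀ ^ (-(n : ℤ) - 1) * d a * (e₀ ^ (-(n : ℤ) - 1))⁻¹
            = e₀ ^ (-(n : ℤ)) * (e₀⁻¹ * d a * e₀) * (e₀ ^ (-(n : ℤ)))⁻¹ := by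
          rw [hz]; group
        rw [this, h1]
        exact ih _ (hconjNt' a ha)
  have hKnormal : K.Normal := by
    constructor
    intro k hk x
    obtain ⟨a, ha, rfl⟩ := (hKmem k).mp hk
    obtain ⟨i, b, hb, rfl⟩ := hdec x
    have h1 : b * d a * b⁻¹ = d a := by
      have hcm := habNt b (d a) hb (hdmem a ha)
      rw [hcm, mul_inv_cancel_right]
    have h2 : (e₀ ^ i * b) * d a * (e₀ ^ i * b)⁻¹
        = e₀ ^ i * (b * d a * b⁻¹) * (e₀ ^ i)⁻¹ := by group
    rw [h2, h1]
    exact hkey i a ha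
  letI := hKnormal
  -- all commutators lie in K
  let f : EE ω →* EE ω ⧸ K := QuotientGroup.mk' K
  have hfd : ∀ a ∈ Nt, f (d a) = 1 := by
    intro a ha
    exact (QuotientGroup.eq_one_iff _).mpr ((hKmem (d a)).mpr ⟨a, ha, rfl⟩)
  have hce : ∀ a ∈ Nt, Commute (f e₀) (f a) := by
    intro a ha
    have h := hfd a ha
    have h2 : f e₀ * f a * (f e₀)⁻¹ * (f a)⁻¹ = 1 := by
      rw [← map_inv, ← map_inv, ← map_mul, ← map_mul, ← map_mul]
      exact h
    exact commutatorElement_eq_one_iff_commute.mp h2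
  have hcc : ∀ a ∈ Nt, ∀ b ∈ Nt, Commute (f a) (f b) := by
    intro a ha b hb
    have := congrArg f (habNt a b ha hb)
    rw [map_mul, map_mul] at this
    exact this
  have hQcomm : ∀ xq yq : EE ω ⧸ K, xq * yq = yq * xq := by
    intro xq yq
    obtain ⟨x, rfl⟩ := QuotientGroup.mk'_surjective K xq
    obtain ⟨y, rfl⟩ := QuotientGroup.mk'_surjective K yq
    obtain ⟨i, a, ha, rfl⟩ := hdec x
    obtain ⟨j, b, hb, rfl⟩ := hdec y
    have hx : f (e₀ ^ i * a) = (f e₀) ^ i * f a := by rw [map_mul, map_zpow]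
    have hy : f (e₀ ^ j * b) = (f e₀) ^ j * f b := by rw [map_mul, map_zpow]
    show f (e₀ ^ i * a) * f (e₀ ^ j * b) = f (e₀ ^ j * b) * f (e₀ ^ i * a)
    rw [hx, hy]
    have c1 : Commute ((f e₀) ^ i * f a) ((f e₀) ^ j * f b) := by
      refine Commute.mul_left ?_ ?_
      · refine Commute.mul_right ?_ ?_
        · exact (Commute.refl (f e₀)).zpow_left i |>.zpow_right j
        · exact ((hce b hb).zpow_left i)
      · refine Commute.mul_right ?_ ?_
        · exact ((hce a ha).symm.zpow_right j)
        · exact hcc a ha b hb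
    exact c1
  -- Circle injects into EE ω ⧸ K
  have hker : ∀ u : Circle, f (ζ u) = 1 → u = 1 := by
    intro u h
    have hK : ζ u ∈ K := (QuotientGroup.eq_one_iff _).mp h
    obtain ⟨a, ha, hEq⟩ := (hKmem (ζ u)).mp hK
    have hg1 : (1 : G) = x₀ * a.g * x₀⁻¹ * a.g⁻¹ := congrArg EE.g hEq
    have hgc : x₀ * a.g = a.g * x₀ := by
      have := commutatorElement_eq_one_iff_mul_comm.mp hg1.symm
      exact this
    have hce2 : e₀ * a = a * e₀ := hcomm e₀ a hgc
    have hda : d a = 1 := by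
      show e₀ * a * e₀⁻¹ * a⁻¹ = 1
      exact commutatorElement_eq_one_iff_mul_comm.mpr hce2
    have : ζ u = 1 := by rw [hEq, hda]
    exact congrArg EE.z this
  -- build the commutative group structure on the quotient and get the retraction
  letI : CommGroup (EE ω ⧸ K) :=
    { (inferInstance : Group (EE ω ⧸ K)) with mul_comm := hQcomm }
  let ι : Additive Circle →+ Additive (EE ω ⧸ K) := MonoidHom.toAdditive (f.comp ζ)
  have hinj : Function.Injective ι := by
    rw [injective_iff_map_eq_zero]
    intro u hu0
    have : f (ζ (Additive.toMul u)) = 1 := hu0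
    have h1 := hker _ this
    exact Additive.toMul.injective h1
  obtain ⟨r, hr⟩ :=
    (Module.Baer.of_divisible (Additive Circle)).extension_property_addMonoidHom ι hinj
      (AddMonoidHom.id (Additive Circle))
  -- the splitting function
  let ρ : EE ω → Circle := fun x => Additive.toMul (r (Additive.ofMul (f x)))
  have hρmul : ∀ x y : EE ω, ρ (x * y) = ρ x * ρ y := by
    intro x y
    show Additive.toMul (r (Additive.ofMul (f (x * y)))) = _
    rw [map_mul]
    rw [show Additive.ofMul (f x * f y) = Additive.ofMul (f x) + Additive.ofMul (f y) from rfl,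
      map_add]
    rfl
  have hρζ : ∀ u : Circle, ρ (ζ u) = u := by
    intro u
    have h := congrArg (fun φ => φ (Additive.ofMul u)) hr
    have h2 : r (ι (Additive.ofMul u)) = Additive.ofMul u := h
    have h3 : ι (Additive.ofMul u) = Additive.ofMul (f (ζ u)) := rfl
    rw [h3] at h2
    show Additive.toMul (r (Additive.ofMul (f (ζ u)))) = u
    rw [h2]
    rfl
  -- conclude
  have key : ∀ g h : G, (⟨1, g⟩ : EE ω) * ⟨1, h⟩ = ζ (ω g h) * ⟨1, g * h⟩ := by
    intro g h
    apply EE.ext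
    · show 1 * 1 * ω g h = ω g h * 1 * ω 1 (g * h)
      rw [hL]; group
    · show g * h = 1 * (g * h)
      rw [one_mul]
  refine ⟨fun g => ρ ⟨1, g⟩, ?_⟩
  intro g h
  have h1 := hρmul ⟨1, g⟩ ⟨1, h⟩
  rw [key g h, hρmul (ζ (ω g h)) ⟨1, g * h⟩, hρζ] at h1
  -- h1 : ω g h * ρ ⟨1, g*h⟩ = ρ ⟨1,g⟩ * ρ ⟨1,h⟩
  calc ω g h = ω g h * ρ ⟨1, g * h⟩ * (ρ ⟨1, g * h⟩)⁻¹ := by group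
    _ = ρ ⟨1, g⟩ * ρ ⟨1, h⟩ * (ρ ⟨1, g * h⟩)⁻¹ := by rw [← h1]
    _ = ρ ⟨1, h⟩ * (ρ ⟨1, g * h⟩)⁻¹ * ρ ⟨1, g⟩ := mul_rotate _ _ _

end Stmt12Aux

open DT in
/-- if `G` has an abelian normal subgroup with cyclic quotient, then
`Br²(G)` is trivial. -/
theorem stmt12 (G : Type*) [Group G] [Finite G] (N : Subgroup G) (hN : N.Normal)
    (hab : ∀ a ∈ N, ∀ b ∈ N, a * b = b * a) (hcyc : IsCyclic (G ⧸ N))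
    (ω : G → G → Circle) (hc : IsCocycle2 ω) (hu : Untwisted2 ω) :
    IsCoboundary2 ω := by
  classical
  set c : Circle := ω 1 1 with hc11
  have hL : ∀ g : G, ω 1 g = c := by
    intro g
    have h := hc 1 1 g
    rw [one_mul, one_mul] at h
    exact mul_left_cancel h
  have hR : ∀ g : G, ω g 1 = c := by
    intro g
    have h := hc g 1 1
    rw [mul_one, mul_one] at h
    have h' : ω g 1 * ω 1 1 = ω g 1 * ω g 1 := by rw [mul_comm (ω 1 1) (ω g 1)] at h; exact h
    exact (mul_left_cancel h').symm
  set ωn : G → G → Circle := fun g h => ω g h * c⁻¹ with hωn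
  have hcn : IsCocycle2 ωn := by
    intro g₁ g₂ g₃
    have h := hc g₁ g₂ g₃
    show ω g₂ g₃ * c⁻¹ * (ω g₁ (g₂ * g₃) * c⁻¹) = ω (g₁ * g₂) g₃ * c⁻¹ * (ω g₁ g₂ * c⁻¹)
    calc ω g₂ g₃ * c⁻¹ * (ω g₁ (g₂ * g₃) * c⁻¹)
        = ω g₂ g₃ * ω g₁ (g₂ * g₃) * (c⁻¹ * c⁻¹) := by
          simp only [mul_assoc, mul_comm, mul_left_comm]
      _ = ω (g₁ * g₂) g₃ * ω g₁ g₂ * (c⁻¹ * c⁻¹) := by rw [h]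
      _ = ω (g₁ * g₂) g₃ * c⁻¹ * (ω g₁ g₂ * c⁻¹) := by
          simp only [mul_assoc, mul_comm, mul_left_comm]
  have hun : Untwisted2 ωn := by
    intro g h hgh
    show ω g h * c⁻¹ = ω h g * c⁻¹
    rw [hu g h hgh]
  have hLn : ∀ g : G, ωn 1 g = 1 := by
    intro g; show ω 1 g * c⁻¹ = 1; rw [hL g, mul_inv_cancel]
  have hRn : ∀ g : G, ωn g 1 = 1 := by
    intro g; show ω g 1 * c⁻¹ = 1; rw [hR g, mul_inv_cancel]
  obtain ⟨α, hα⟩ := Stmt12Aux.main N hN hab hcyc ωn hcn hun hLn hRn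
  refine ⟨fun g => α g * c, ?_⟩
  intro g₁ g₂
  have h := hα g₁ g₂
  have h2 : ω g₁ g₂ = α g₂ * (α (g₁ * g₂))⁻¹ * α g₁ * c := by
    have : ω g₁ g₂ * c⁻¹ = α g₂ * (α (g₁ * g₂))⁻¹ * α g₁ := h
    calc ω g₁ g₂ = ω g₁ g₂ * c⁻¹ * c := by group
      _ = α g₂ * (α (g₁ * g₂))⁻¹ * α g₁ * c := by rw [this]
  rw [h2]
  rw [mul_inv_rev]
  simp only [mul_assoc, mul_comm, mul_left_comm]
  rw [mul_inv_cancel, mul_one]
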